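/- Identify ℝ⁶ ≅ ℂ³ via (z¹,z²,z³) = (x¹+ix⁴, x²+ix⁵, x³+ix⁶) with standard basis vectors e₁,…,e₆. For every pair (v,w) of orthonormal vectors in ℝ⁶ there exist A ∈ SU(3) and θ ∈ [0,π] such that A·v = e₁ and A·w = cos(θ)·e₄ + sin(θ)·e₂. -/

import Mathlib

open Complex Matrix

noncomputable section

local notation "E3" => EuclideanSpace ℂ (Fin 3)

lemma aux_key (b : OrthonormalBasis (Fin 3) ℂ (EuclideanSpace ℂ (Fin 3))) :
    ∃ A ∈ Matrix.specialUnitaryGroup (Fin 3) ℂ,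
      ∀ x : EuclideanSpace ℂ (Fin 3), b.repr x 2 = 0 →
        A *ᵥ (WithLp.equiv 2 (Fin 3 → ℂ) x) = ![b.repr x 0, b.repr x 1, 0] := by
  classical
  set M : Matrix (Fin 3) (Fin 3) ℂ := Matrix.of fun i j => (starRingEnd ℂ) (b i j) with hM
  have hMx : ∀ x : EuclideanSpace ℂ (Fin 3), ∀ i,
      (M *ᵥ (WithLp.equiv 2 (Fin 3 → ℂ) x)) i = b.repr x i := by
    intro x i
    rw [OrthonormalBasis.repr_apply_apply]
    simp [hM, Matrix.mulVec, dotProduct, PiLp.inner_apply, RCLike.inner_apply]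
    exact Finset.sum_congr rfl fun _ _ => mul_comm _ _
  have hMU : M ∈ Matrix.unitaryGroup (Fin 3) ℂ := by
    rw [Matrix.mem_unitaryGroup_iff]
    ext i j
    have := orthonormal_iff_ite.mp b.orthonormal i j
    rw [PiLp.inner_apply] at this
    simp only [RCLike.inner_apply] at this
    simp [hM, Matrix.mul_apply, Matrix.one_apply, Matrix.star_apply, ← this]
    exact Finset.sum_congr rfl fun _ _ => mul_comm _ _
  have hsMU : star M * M = 1 := (Matrix.mem_unitaryGroup_iff').mp hMU
  have hMsU : M * star M = 1 := (Matrix.mem_unitaryGroup_iff).mp hMU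
  set d : ℂ := M.det with hd
  have hdd : star d * d = 1 := by
    have : (star M * M).det = (1 : Matrix (Fin 3) (Fin 3) ℂ).det := by rw [hsMU]
    simpa [Matrix.det_mul, Matrix.star_eq_conjTranspose, Matrix.det_conjTranspose] using this
  set D : Fin 3 → ℂ := ![1, 1, star d] with hD
  have hDU : Matrix.diagonal D ∈ Matrix.unitaryGroup (Fin 3) ℂ := by
    rw [Matrix.mem_unitaryGroup_iff']
    rw [Matrix.star_eq_conjTranspose, Matrix.diagonal_conjTranspose, Matrix.diagonal_mul_diagonal]
    ext i j
    fin_cases i <;> fin_cases j <;>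
      simp [hD, Matrix.diagonal_apply, Matrix.one_apply] <;>
      simpa [mul_comm] using hdd
  refine ⟨Matrix.diagonal D * M, ?_, ?_⟩
  · rw [Matrix.mem_specialUnitaryGroup_iff]
    constructor
    · exact mul_mem hDU hMU
    · rw [Matrix.det_mul, Matrix.det_diagonal]
      simp only [hD, Fin.prod_univ_three, ← hd]
      simpa [mul_comm] using hdd
  · intro x hx2
    rw [← Matrix.mulVec_mulVec]
    funext i
    have h1 : (Matrix.diagonal D *ᵥ (M *ᵥ (WithLp.equiv 2 (Fin 3 → ℂ) x))) i
        = D i * b.repr x i := by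
      rw [Matrix.mulVec_diagonal, hMx]
    rw [h1]
    fin_cases i <;> simp [hD, hx2]

open scoped InnerProductSpace

/-- Lemma 3.1(a), transitivity part.  Identify `ℝ⁶ ≅ ℂ³` via
`(z¹,z²,z³) = (x¹+ix⁴, x²+ix⁵, x³+ix⁶)`; orthonormality of `(v,w)` in `ℝ⁶` means
`‖v‖ = ‖w‖ = 1` and `Re Σ conj(vⱼ)·wⱼ = 0`.  Every such pair can be moved by some
`A ∈ SU(3)` to `(e₁, cos(θ)e₄ + sin(θ)e₂) = ((1,0,0), (i·cosθ, sinθ, 0))` with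
`θ ∈ [0,π]`. -/
theorem stmt_5 (v w : Fin 3 → ℂ)
    (hv : ∑ i, Complex.normSq (v i) = 1)
    (hw : ∑ i, Complex.normSq (w i) = 1)
    (hvw : (∑ i, (starRingEnd ℂ) (v i) * w i).re = 0) :
    ∃ A ∈ Matrix.specialUnitaryGroup (Fin 3) ℂ, ∃ θ ∈ Set.Icc (0 : ℝ) Real.pi,
      A *ᵥ v = ![1, 0, 0] ∧
      A *ᵥ w = ![Complex.I * Real.cos θ, (Real.sin θ : ℂ), 0] := by
  classical
  set V : EuclideanSpace ℂ (Fin 3) := (WithLp.equiv 2 (Fin 3 → ℂ)).symm v with hVdef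
  set W : EuclideanSpace ℂ (Fin 3) := (WithLp.equiv 2 (Fin 3 → ℂ)).symm w with hWdef
  have key : ∀ a c : Fin 3 → ℂ,
      ⟪(WithLp.equiv 2 (Fin 3 → ℂ)).symm a, (WithLp.equiv 2 (Fin 3 → ℂ)).symm c⟫_ℂ
        = ∑ i, (starRingEnd ℂ) (a i) * c i := by
    intro a c
    rw [PiLp.inner_apply]
    simp [RCLike.inner_apply]
    exact Finset.sum_congr rfl fun _ _ => mul_comm _ _
  have hnsq : ∀ a : Fin 3 → ℂ, (∑ i, (starRingEnd ℂ) (a i) * a i)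
      = ((∑ i, Complex.normSq (a i) : ℝ) : ℂ) := by
    intro a
    push_cast
    refine Finset.sum_congr rfl fun i _ => ?_
    rw [Complex.normSq_eq_conj_mul_self]
  have hVV : ⟪V, V⟫_ℂ = 1 := by rw [hVdef, key, hnsq, hv]; norm_num
  have hWW : ⟪W, W⟫_ℂ = 1 := by rw [hWdef, key, hnsq, hw]; norm_num
  set c : ℂ := ⟪V, W⟫_ℂ with hcdef
  have hcre : c.re = 0 := by rw [hcdef, hVdef, hWdef, key]; exact hvw
  set t : ℝ := c.im with htdef
  have hc : c = (t : ℝ) * Complex.I := by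
    apply Complex.ext <;> simp [hcre, htdef]
  set w' : EuclideanSpace ℂ (Fin 3) := W - c • V with hw'def
  have hWV : ⟪W, V⟫_ℂ = (starRingEnd ℂ) c := by
    rw [hcdef, ← inner_conj_symm]
  have hcc : (starRingEnd ℂ) c * c = (t : ℂ) ^ 2 := by
    rw [hc]
    simp only [_root_.map_mul, Complex.conj_ofReal, Complex.conj_I]
    ring_nf
    rw [Complex.I_sq]
    ring
  have hww' : ⟪w', w'⟫_ℂ = 1 - (t : ℂ) ^ 2 := by
    rw [hw'def, inner_sub_sub_self]
    simp only [inner_smul_left, inner_smul_right, hVV, hWW, ← hcdef, hWV, mul_one]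
    linear_combination -hcc
  set s : ℝ := ‖w'‖ with hsdef
  have hs0 : 0 ≤ s := norm_nonneg _
  have hs_sq : s ^ 2 = 1 - t ^ 2 := by
    have h1 : ⟪w', w'⟫_ℂ = ((s : ℂ)) ^ 2 := by
      rw [hsdef]; exact_mod_cast inner_self_eq_norm_sq_to_K (𝕜 := ℂ) w'
    have h2 : ((s ^ 2 : ℝ) : ℂ) = ((1 - t ^ 2 : ℝ) : ℂ) := by
      push_cast
      rw [← h1, hww']
    exact_mod_cast h2
  have ht1 : -1 ≤ t := by nlinarith [sq_nonneg s]
  have ht2 : t ≤ 1 := by nlinarith [sq_nonneg s]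
  have hcos : Real.cos (Real.arccos t) = t := Real.cos_arccos ht1 ht2
  have hsin : Real.sin (Real.arccos t) = s := by
    rw [Real.sin_arccos, ← hs_sq, Real.sqrt_sq hs0]
  have hVn : ‖V‖ = 1 := by
    have h := inner_self_eq_norm_sq_to_K (𝕜 := ℂ) V
    rw [hVV] at h
    have h' : ‖V‖ ^ 2 = 1 := Complex.ofReal_eq_one.mp (by push_cast; exact h.symm)
    nlinarith [norm_nonneg V]
  have hmain : ∃ b : OrthonormalBasis (Fin 3) ℂ (EuclideanSpace ℂ (Fin 3)),
      b.repr V = EuclideanSpace.single 0 1 ∧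
      b.repr W = c • EuclideanSpace.single 0 1 + (s : ℂ) • EuclideanSpace.single 1 1 := by
    have hcard : Module.finrank ℂ (EuclideanSpace ℂ (Fin 3)) = Fintype.card (Fin 3) := by
      simp
    by_cases hz : w' = 0
    · -- degenerate case : W = c • V
      have hsz : s = 0 := by rw [hsdef, hz, norm_zero]
      set f : Fin 3 → EuclideanSpace ℂ (Fin 3) := fun _ => V with hf
      have horth : Orthonormal ℂ (({0} : Set (Fin 3)).restrict f) := by
        rw [orthonormal_iff_ite]
        rintro ⟨i, hi⟩ ⟨j, hj⟩
        simp only [Set.mem_singleton_iff] at hi hj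
        subst hi; subst hj
        simp [hf, Set.restrict, hVV, hVn]
      obtain ⟨b, hb⟩ := horth.exists_orthonormalBasis_extension_of_card_eq hcard
      have hb0 : b 0 = V := hb 0 (by simp)
      have hWeq : W = c • V := by
        have := hz
        rw [hw'def, sub_eq_zero] at this
        exact this
      refine ⟨b, ?_, ?_⟩
      · rw [← hb0, b.repr_self]
      · rw [hWeq, _root_.map_smul, ← hb0, b.repr_self, hsz]
        simp
    · -- generic case
      have hsne : s ≠ 0 := by rwa [hsdef, norm_ne_zero_iff]
      have hsne' : (s : ℂ) ≠ 0 := by exact_mod_cast hsne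
      set u : EuclideanSpace ℂ (Fin 3) := ((s : ℂ))⁻¹ • w' with hu
      have hVw' : ⟪V, w'⟫_ℂ = 0 := by
        rw [hw'def, inner_sub_right, inner_smul_right, hVV, ← hcdef]
        ring
      have hw'V : ⟪w', V⟫_ℂ = 0 := by
        rw [← inner_conj_symm, hVw', map_zero]
      have hw'w' : ⟪w', w'⟫_ℂ = (s : ℂ) ^ 2 := by
        rw [hsdef]; exact_mod_cast inner_self_eq_norm_sq_to_K (𝕜 := ℂ) w'
      set f : Fin 3 → EuclideanSpace ℂ (Fin 3) := ![V, u, 0] with hf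
      have horth : Orthonormal ℂ (({0, 1} : Set (Fin 3)).restrict f) := by
        rw [orthonormal_iff_ite]
        rintro ⟨i, hi⟩ ⟨j, hj⟩
        simp only [Set.mem_insert_iff, Set.mem_singleton_iff] at hi hj
        have hsc : (starRingEnd ℂ) ((s : ℂ))⁻¹ = ((s : ℂ))⁻¹ := by
          rw [map_inv₀, Complex.conj_ofReal]
        have hun : ‖((s : ℂ))⁻¹ • w'‖ = 1 := by
          rw [norm_smul, norm_inv, ← hsdef, Complex.norm_of_nonneg hs0, inv_mul_cancel₀ hsne]
        rcases hi with rfl | rfl <;> rcases hj with rfl | rfl <;>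
          simp [hf, Set.restrict, hu, inner_smul_left, inner_smul_right, hVV, hVw', hw'V,
            hw'w', hsc, Subtype.ext_iff, hun, hVn] <;>
          field_simp [hsne'] <;> ring
      obtain ⟨b, hb⟩ := horth.exists_orthonormalBasis_extension_of_card_eq hcard
      have hb0 : b 0 = V := by
        have := hb 0 (by simp); simpa [hf] using this
      have hb1 : b 1 = u := by
        have := hb 1 (by simp); simpa [hf] using this
      have hWeq : W = c • V + (s : ℂ) • u := by
        rw [hu, smul_smul, mul_inv_cancel₀ (by exact_mod_cast hsne), one_smul, hw'def]
        abel
      refine ⟨b, ?_, ?_⟩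
      · rw [← hb0, b.repr_self]
      · rw [hWeq, _root_.map_add, _root_.map_smul, _root_.map_smul, ← hb0, ← hb1, b.repr_self, b.repr_self]
  obtain ⟨b, hrV, hrW⟩ := hmain
  obtain ⟨A, hA, hAx⟩ := aux_key b
  refine ⟨A, hA, Real.arccos t, ⟨Real.arccos_nonneg t, Real.arccos_le_pi t⟩, ?_, ?_⟩
  · have h2 : b.repr V 2 = 0 := by rw [hrV]; simp [EuclideanSpace.single_apply]
    have := hAx V h2
    rw [hVdef, Equiv.apply_symm_apply] at this
    rw [this, hrV]
    funext i
    fin_cases i <;> simp [EuclideanSpace.single_apply]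
  · have h2 : b.repr W 2 = 0 := by
      rw [hrW]; simp [EuclideanSpace.single_apply]
    have := hAx W h2
    rw [hWdef, Equiv.apply_symm_apply] at this
    rw [this, hrW, hcos, hsin]
    funext i
    fin_cases i <;> simp [EuclideanSpace.single_apply, hc] <;> ring
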